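/- For any categorical distribution θ on a finite nonempty set X and any α₀ ∈ ℝ, the function α ↦ H(T(θ,α)||θ) is differentiable at α₀ with derivative −V(T(θ,α₀)||θ). -/

import Mathlib

open Real BigOperators
open scoped Classical

variable {X : Type*}

/-- A categorical distribution on a finite set: positive everywhere and sums to 1. -/
def IsCatDist [Fintype X] (θ : X → ℝ) : Prop :=
  (∀ x, 0 < θ x) ∧ ∑ x, θ x = 1

/-- The tilt of order `α` of a categorical distribution. -/
noncomputable def tilt [Fintype X] (θ : X → ℝ) (α : ℝ) : X → ℝ :=
  fun x => θ x ^ α / ∑ y, θ y ^ α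

/-- Shannon entropy (natural log). -/
noncomputable def shannonEntropy [Fintype X] (ρ : X → ℝ) : ℝ :=
  ∑ x, ρ x * Real.log (1 / ρ x)

/-- Cross entropy `H(ρ‖θ)`. -/
noncomputable def crossEntropy [Fintype X] (ρ θ : X → ℝ) : ℝ :=
  ∑ x, ρ x * Real.log (1 / θ x)

/-- Relative entropy (KL divergence) `D(ρ‖θ)`. -/
noncomputable def relEntropy [Fintype X] (ρ θ : X → ℝ) : ℝ :=
  ∑ x, ρ x * Real.log (ρ x / θ x)

/-- Rényi entropy of order `α`. -/
noncomputable def renyiEntropy [Fintype X] (θ : X → ℝ) (α : ℝ) : ℝ :=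
  (1 / (1 - α)) * Real.log (∑ x, θ x ^ α)

/-- Varentropy. -/
noncomputable def varentropy [Fintype X] (ρ : X → ℝ) : ℝ :=
  ∑ x, ρ x * (Real.log (1 / ρ x) - shannonEntropy ρ) ^ 2

/-- Cross varentropy. -/
noncomputable def crossVarentropy [Fintype X] (ρ θ : X → ℝ) : ℝ :=
  ∑ x, ρ x * (Real.log (1 / θ x) - crossEntropy ρ θ) ^ 2

/-- Probability of an `n`-string under the i.i.d. extension of `θ`. -/
noncomputable def strProb (θ : X → ℝ) {n : ℕ} (x : Fin n → X) : ℝ := ∏ i, θ (x i)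

/-- Probability of a set of `n`-strings. -/
noncomputable def setProb [Fintype X] (θ : X → ℝ) {n : ℕ} (S : Finset (Fin n → X)) : ℝ :=
  ∑ x ∈ S, strProb θ x

/-- `θ` has a unique maximizer and a unique minimizer. -/
def UniqueExtremizers [Fintype X] (θ : X → ℝ) : Prop :=
  (∃! x : X, ∀ y, θ y ≤ θ x) ∧ (∃! x : X, ∀ y, θ x ≤ θ y)

/-- Tilted weakly typical set of order `α`. -/
noncomputable def typicalSetA [Fintype X] (θ : X → ℝ) (α : ℝ) (n : ℕ) (ε : ℝ) :
    Finset (Fin n → X) :=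
  Finset.univ.filter (fun x =>
    Real.exp (-(n : ℝ) * crossEntropy (tilt θ α) θ - n * ε) < strProb θ x ∧
    strProb θ x < Real.exp (-(n : ℝ) * crossEntropy (tilt θ α) θ + n * ε))

/-- The set `D^n_{θ,α,ε}`. -/
noncomputable def setD [Fintype X] (θ : X → ℝ) (α : ℝ) (n : ℕ) (ε : ℝ) :
    Finset (Fin n → X) :=
  Finset.univ.filter (fun x =>
    strProb (tilt θ α) x > Real.exp (-(n : ℝ) * shannonEntropy (tilt θ α) - n * |α| * ε))

/-- The set `E^n_{θ,α,ε}`. -/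
noncomputable def setE [Fintype X] (θ : X → ℝ) (α : ℝ) (n : ℕ) (ε : ℝ) :
    Finset (Fin n → X) :=
  Finset.univ.filter (fun x =>
    strProb (tilt θ α) x < Real.exp (-(n : ℝ) * shannonEntropy (tilt θ α) + n * |α| * ε))

/-- A guesswork function for `θ` on `n`-strings: a bijection onto `{1,…,|X|^n}`
that orders strings from most likely to least likely. -/
def IsGuesswork [Fintype X] (θ : X → ℝ) {n : ℕ} (G : (Fin n → X) → ℕ) : Prop :=
  Function.Injective G ∧
  (∀ x, G x ∈ Finset.Icc 1 (Fintype.card X ^ n)) ∧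
  (∀ m ∈ Finset.Icc 1 (Fintype.card X ^ n), ∃ x, G x = m) ∧
  (∀ x y, strProb θ x > strProb θ y → G x < G y)

theorem hasDerivAt_crossEntropy_tilt [Fintype X] [Nonempty X] (θ : X → ℝ)
    (hθ : IsCatDist θ) (α₀ : ℝ) :
    HasDerivAt (fun α : ℝ => crossEntropy (tilt θ α) θ)
      (-(crossVarentropy (tilt θ α₀) θ)) α₀ := by
  obtain ⟨hpos, hsum⟩ := hθ
  set ℓ : X → ℝ := fun x => Real.log (1 / θ x) with hℓ
  have hlog : ∀ x, Real.log (θ x) = -ℓ x := by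
    intro x
    simp [hℓ, one_div, Real.log_inv]
  have hS : ∀ α : ℝ, 0 < ∑ y, θ y ^ α := fun α =>
    Finset.sum_pos (fun y _ => Real.rpow_pos_of_pos (hpos y) α) Finset.univ_nonempty
  have key : ∀ α : ℝ, crossEntropy (tilt θ α) θ
      = (∑ x, θ x ^ α * ℓ x) / (∑ y, θ y ^ α) := by
    intro α
    simp only [crossEntropy, tilt, div_mul_eq_mul_div, ← Finset.sum_div, hℓ]
  set S : ℝ := ∑ y, θ y ^ α₀ with hSdef
  set N : ℝ := ∑ x, θ x ^ α₀ * ℓ x with hNdef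
  set M : ℝ := ∑ x, θ x ^ α₀ * ℓ x ^ 2 with hMdef
  have hSne : S ≠ 0 := ne_of_gt (hS α₀)
  have hZ : HasDerivAt (fun α : ℝ => ∑ y, θ y ^ α) (-N) α₀ := by
    have h : HasDerivAt (fun α : ℝ => ∑ y, θ y ^ α)
        (∑ y, θ y ^ α₀ * Real.log (θ y)) α₀ :=
      HasDerivAt.fun_sum fun y _ => (Real.hasStrictDerivAt_const_rpow (hpos y) α₀).hasDerivAt
    have he : (∑ y, θ y ^ α₀ * Real.log (θ y)) = -N := by
      rw [hNdef, ← Finset.sum_neg_distrib]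
      exact Finset.sum_congr rfl fun y _ => by rw [hlog y]; ring
    rwa [he] at h
  have hN : HasDerivAt (fun α : ℝ => ∑ x, θ x ^ α * ℓ x) (-M) α₀ := by
    have h : HasDerivAt (fun α : ℝ => ∑ x, θ x ^ α * ℓ x)
        (∑ x, θ x ^ α₀ * Real.log (θ x) * ℓ x) α₀ :=
      HasDerivAt.fun_sum fun x _ =>
        ((Real.hasStrictDerivAt_const_rpow (hpos x) α₀).hasDerivAt).mul_const (ℓ x)
    have he : (∑ x, θ x ^ α₀ * Real.log (θ x) * ℓ x) = -M := by
      rw [hMdef, ← Finset.sum_neg_distrib]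
      exact Finset.sum_congr rfl fun x _ => by rw [hlog x]; ring
    rwa [he] at h
  have hdiv : HasDerivAt (fun α : ℝ => (∑ x, θ x ^ α * ℓ x) / (∑ y, θ y ^ α))
      (((-M) * S - N * (-N)) / S ^ 2) α₀ := hN.div hZ hSne
  have hV : crossVarentropy (tilt θ α₀) θ = M / S - (N / S) ^ 2 := by
    have hterm : ∀ x : X, tilt θ α₀ x * (ℓ x - crossEntropy (tilt θ α₀) θ) ^ 2
        = (1 / S) * (θ x ^ α₀ * ℓ x ^ 2) - (2 * N / S ^ 2) * (θ x ^ α₀ * ℓ x)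
          + (N ^ 2 / S ^ 3) * θ x ^ α₀ := by
      intro x
      rw [key α₀]
      show θ x ^ α₀ / S * (ℓ x - N / S) ^ 2 = _
      field_simp
      ring
    calc crossVarentropy (tilt θ α₀) θ
        = ∑ x, ((1 / S) * (θ x ^ α₀ * ℓ x ^ 2) - (2 * N / S ^ 2) * (θ x ^ α₀ * ℓ x)
            + (N ^ 2 / S ^ 3) * θ x ^ α₀) := by
          unfold crossVarentropy
          exact Finset.sum_congr rfl fun x _ => hterm x
      _ = (1 / S) * M - (2 * N / S ^ 2) * N + (N ^ 2 / S ^ 3) * S := by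
          simp only [Finset.sum_add_distrib, Finset.sum_sub_distrib, ← Finset.mul_sum,
            ← hMdef, ← hNdef, ← hSdef]
      _ = M / S - (N / S) ^ 2 := by field_simp; ring
  have hval : ((-M) * S - N * (-N)) / S ^ 2 = -(crossVarentropy (tilt θ α₀) θ) := by
    rw [hV]; field_simp; ring
  have hfun : (fun α : ℝ => crossEntropy (tilt θ α) θ)
      = fun α : ℝ => (∑ x, θ x ^ α * ℓ x) / (∑ y, θ y ^ α) := funext key
  rw [hfun, ← hval]
  exact hdiv
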